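/- arXiv:2004.09723 — 3 statements merged into one kernel-verified Lean document; each statement's English description precedes it below -/
import Mathlib

section
/- (No momentum component.) Let A : Γ → ℝ³ be a C¹ function that is invariant under translations ({P_a, A^b} = 0 for all a,b), transforms as a vector under spatial rotations ({J_ab, A^c} = δ_ac A^b − δ_bc A^a for all a,b,c), and is invariant under time reversal (A(x,−p,−s) = A(x,p,s) for all (x,p,s)). Then A(x,p,s)·p = 0 for all (x,p,s) ∈ Γ. -/
noncomputable section

open Finset

abbrev R3 := Fin 3 → ℝ

/-- The spin phase space Γ = ℝ³ × ℝ³ × ℝ³ with points (x, p, s). -/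
abbrev Phase := R3 × R3 × R3

/-- Euclidean dot product on ℝ³. -/
def dot3 (v w : R3) : ℝ := ∑ a, v a * w a

/-- Euclidean norm on ℝ³. -/
def norm3 (v : R3) : ℝ := Real.sqrt (dot3 v v)

/-- Cross product on ℝ³. -/
def cross3 (v w : R3) : R3 :=
  ![v 1 * w 2 - v 2 * w 1, v 2 * w 0 - v 0 * w 2, v 0 * w 1 - v 1 * w 0]

/-- Kronecker delta. -/
def kdelta (a b : Fin 3) : ℝ := if a = b then 1 else 0

/-- Sign of an integer, valued in ℝ. -/
def isgn (x : ℤ) : ℝ := if 0 < x then 1 else if x < 0 then -1 else 0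

/-- Totally antisymmetric symbol on three indices with ε₀₁₂ = +1. -/
def eps3 (a b c : Fin 3) : ℝ :=
  isgn (((b : ℕ) : ℤ) - ((a : ℕ) : ℤ)) * isgn (((c : ℕ) : ℤ) - ((a : ℕ) : ℤ)) *
  isgn (((c : ℕ) : ℤ) - ((b : ℕ) : ℤ))

/-- Gradient of f with respect to x. -/
def dX (f : Phase → ℝ) (γ : Phase) : R3 := fun a => fderiv ℝ f γ (Pi.single a 1, 0, 0)

/-- Gradient of f with respect to p. -/
def dP (f : Phase → ℝ) (γ : Phase) : R3 := fun a => fderiv ℝ f γ (0, Pi.single a 1, 0)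

/-- Gradient of f with respect to s. -/
def dS (f : Phase → ℝ) (γ : Phase) : R3 := fun a => fderiv ℝ f γ (0, 0, Pi.single a 1)

/-- Poisson bracket {f,g} = ∇ₓf·∇ₚg − ∇ₚf·∇ₓg + s·(∇ₛf × ∇ₛg) on Γ. -/
def pb (f g : Phase → ℝ) (γ : Phase) : ℝ :=
  dot3 (dX f γ) (dP g γ) - dot3 (dP f γ) (dX g γ)
    + dot3 γ.2.2 (cross3 (dS f γ) (dS g γ))

/-- Generator of spatial translations: P_a(x,p,s) = p_a. -/
def Pgen (a : Fin 3) : Phase → ℝ := fun γ => γ.2.1 a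

/-- Generator of rotations: J_ab(x,p,s) = x_a p_b − x_b p_a + ε_{abc} s_c. -/
def Jgen (a b : Fin 3) : Phase → ℝ :=
  fun γ => γ.1 a * γ.2.1 b - γ.1 b * γ.2.1 a + ∑ c, eps3 a b c * γ.2.2 c

section Aux

def Lx (a : Fin 3) : Phase →L[ℝ] ℝ :=
  (ContinuousLinearMap.proj a).comp (ContinuousLinearMap.fst ℝ R3 (R3 × R3))

def Lp (a : Fin 3) : Phase →L[ℝ] ℝ :=
  (ContinuousLinearMap.proj a).comp ((ContinuousLinearMap.fst ℝ R3 R3).comp (ContinuousLinearMap.snd ℝ R3 (R3 × R3)))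

def Ls (a : Fin 3) : Phase →L[ℝ] ℝ :=
  (ContinuousLinearMap.proj a).comp ((ContinuousLinearMap.snd ℝ R3 R3).comp (ContinuousLinearMap.snd ℝ R3 (R3 × R3)))

@[simp] lemma Lx_apply (a : Fin 3) (v : Phase) : Lx a v = v.1 a := rfl
@[simp] lemma Lp_apply (a : Fin 3) (v : Phase) : Lp a v = v.2.1 a := rfl
@[simp] lemma Ls_apply (a : Fin 3) (v : Phase) : Ls a v = v.2.2 a := rfl

lemma hasFDerivAt_Pgen (a : Fin 3) (γ : Phase) : HasFDerivAt (Pgen a) (Lp a) γ := by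
  exact (Lp a).hasFDerivAt

lemma hasFDerivAt_Jgen (a b : Fin 3) (γ : Phase) :
    HasFDerivAt (Jgen a b)
      ((γ.1 a • Lp b + γ.2.1 b • Lx a) - (γ.1 b • Lp a + γ.2.1 a • Lx b)
        + ∑ c, eps3 a b c • Ls c) γ := by
  have h1 : HasFDerivAt (fun γ' : Phase => γ'.1 a * γ'.2.1 b)
      (γ.1 a • Lp b + γ.2.1 b • Lx a) γ := (Lx a).hasFDerivAt.mul (Lp b).hasFDerivAt
  have h2 : HasFDerivAt (fun γ' : Phase => γ'.1 b * γ'.2.1 a)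
      (γ.1 b • Lp a + γ.2.1 a • Lx b) γ := (Lx b).hasFDerivAt.mul (Lp a).hasFDerivAt
  have h3 : HasFDerivAt (fun γ' : Phase => ∑ c, eps3 a b c * γ'.2.2 c)
      (∑ c, eps3 a b c • Ls c) γ :=
    HasFDerivAt.fun_sum (fun c _ => ((Ls c).hasFDerivAt.const_mul (eps3 a b c)))
  exact ((h1.sub h2).add h3)

end Aux
section Aux2

@[simp] lemma single_eval (d e : Fin 3) : (Pi.single (M := fun _ : Fin 3 => ℝ) d 1) e = if e = d then (1:ℝ) else 0 := by
  rw [Pi.single_apply]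

lemma dX_Pgen (a : Fin 3) (γ : Phase) : dX (Pgen a) γ = 0 := by
  funext d
  simp [dX, (hasFDerivAt_Pgen a γ).fderiv]

lemma dP_Pgen (a : Fin 3) (γ : Phase) : dP (Pgen a) γ = fun d => if a = d then 1 else 0 := by
  funext d
  simp [dP, (hasFDerivAt_Pgen a γ).fderiv, Pi.single_apply]

lemma dS_Pgen (a : Fin 3) (γ : Phase) : dS (Pgen a) γ = 0 := by
  funext d
  simp [dS, (hasFDerivAt_Pgen a γ).fderiv]

@[simp] lemma cross3_zero_left (v : R3) : cross3 0 v = 0 := by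
  funext d; fin_cases d <;> simp [cross3]

@[simp] lemma cross3_zero_right (v : R3) : cross3 v 0 = 0 := by
  funext d; fin_cases d <;> simp [cross3]

@[simp] lemma dot3_zero_right (v : R3) : dot3 v 0 = 0 := by simp [dot3]
@[simp] lemma dot3_zero_left (v : R3) : dot3 0 v = 0 := by simp [dot3]

lemma pb_Pgen_eq (a : Fin 3) (g : Phase → ℝ) (γ : Phase) :
    pb (Pgen a) g γ = -(dX g γ a) := by
  simp [pb, dX_Pgen, dP_Pgen, dS_Pgen, dot3, ite_mul, Finset.sum_ite_eq]

lemma dX_Jgen (a b : Fin 3) (γ : Phase) :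
    dX (Jgen a b) γ = fun d => (if a = d then γ.2.1 b else 0) - (if b = d then γ.2.1 a else 0) := by
  funext d
  simp [dX, (hasFDerivAt_Jgen a b γ).fderiv, Pi.single_apply]

lemma dP_Jgen (a b : Fin 3) (γ : Phase) :
    dP (Jgen a b) γ = fun d => (if b = d then γ.1 a else 0) - (if a = d then γ.1 b else 0) := by
  funext d
  simp [dP, (hasFDerivAt_Jgen a b γ).fderiv, Pi.single_apply]

lemma dS_Jgen (a b : Fin 3) (γ : Phase) :
    dS (Jgen a b) γ = fun d => eps3 a b d := by
  funext d
  simp [dS, (hasFDerivAt_Jgen a b γ).fderiv, Pi.single_apply, Finset.sum_ite_eq]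

end Aux2
section Aux3

lemma pb_Jgen_eq (a b : Fin 3) (g : Phase → ℝ) (γ : Phase) :
    pb (Jgen a b) g γ =
      (γ.2.1 b * dP g γ a - γ.2.1 a * dP g γ b)
      - (γ.1 a * dX g γ b - γ.1 b * dX g γ a)
      + dot3 γ.2.2 (cross3 (fun d => eps3 a b d) (dS g γ)) := by
  simp only [pb, dX_Jgen, dP_Jgen, dS_Jgen, dot3]
  rw [show (∑ d, ((if a = d then γ.2.1 b else 0) - (if b = d then γ.2.1 a else 0)) * dP g γ d)
      = γ.2.1 b * dP g γ a - γ.2.1 a * dP g γ b by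
    simp [sub_mul, ite_mul, Finset.sum_sub_distrib, Finset.sum_ite_eq]]
  rw [show (∑ d, ((if b = d then γ.1 a else 0) - (if a = d then γ.1 b else 0)) * dX g γ d)
      = γ.1 a * dX g γ b - γ.1 b * dX g γ a by
    simp [sub_mul, ite_mul, Finset.sum_sub_distrib, Finset.sum_ite_eq]]

end Aux3
section Aux4

variable (A : Phase → R3)

lemma diff_Ac (hA : ContDiff ℝ 1 A) (c : Fin 3) : Differentiable ℝ (fun γ' : Phase => A γ' c) :=
  (ContinuousLinearMap.proj c : R3 →L[ℝ] ℝ).differentiable.comp (hA.differentiable one_ne_zero)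

lemma hasFDerivAt_f (hA : ContDiff ℝ 1 A) (γ : Phase) :
    HasFDerivAt (fun γ' : Phase => dot3 (A γ') γ'.2.1)
      (∑ c, (A γ c • Lp c + γ.2.1 c • fderiv ℝ (fun γ' => A γ' c) γ)) γ := by
  have : (fun γ' : Phase => dot3 (A γ') γ'.2.1)
      = fun γ' => ∑ c, A γ' c * γ'.2.1 c := by
    funext γ'; simp [dot3]
  rw [this]
  exact HasFDerivAt.fun_sum fun c _ =>
    ((diff_Ac A hA c γ).hasFDerivAt.mul (Lp c).hasFDerivAt)

lemma fderiv_f_apply (hA : ContDiff ℝ 1 A) (γ v : Phase) :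
    fderiv ℝ (fun γ' : Phase => dot3 (A γ') γ'.2.1) γ v
      = ∑ c, (A γ c * v.2.1 c + γ.2.1 c * fderiv ℝ (fun γ' => A γ' c) γ v) := by
  rw [(hasFDerivAt_f A hA γ).fderiv]
  simp

lemma dX_f (hA : ContDiff ℝ 1 A) (γ : Phase) (a : Fin 3) :
    dX (fun γ' : Phase => dot3 (A γ') γ'.2.1) γ a
      = ∑ c, γ.2.1 c * dX (fun γ' => A γ' c) γ a := by
  simp [dX, fderiv_f_apply A hA]

lemma dP_f (hA : ContDiff ℝ 1 A) (γ : Phase) (a : Fin 3) :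
    dP (fun γ' : Phase => dot3 (A γ') γ'.2.1) γ a
      = A γ a + ∑ c, γ.2.1 c * dP (fun γ' => A γ' c) γ a := by
  simp [dP, fderiv_f_apply A hA, Pi.single_apply, Finset.sum_add_distrib, mul_ite,
    Finset.sum_ite_eq]

lemma dS_f (hA : ContDiff ℝ 1 A) (γ : Phase) (a : Fin 3) :
    dS (fun γ' : Phase => dot3 (A γ') γ'.2.1) γ a
      = ∑ c, γ.2.1 c * dS (fun γ' => A γ' c) γ a := by
  simp [dS, fderiv_f_apply A hA]

end Aux4

lemma key (A : Phase → R3) (hA : ContDiff ℝ 1 A)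
    (h1 : ∀ a b : Fin 3, ∀ γ, pb (Pgen a) (fun γ => A γ b) γ = 0)
    (h2 : ∀ a b c : Fin 3, ∀ γ, pb (Jgen a b) (fun γ => A γ c) γ
      = kdelta a c * A γ b - kdelta b c * A γ a)
    (x q r : R3) (n : R3) :
    dot3 (dP (fun γ' : Phase => dot3 (A γ') γ'.2.1) (x,q,r)) (cross3 n q)
      + dot3 (dS (fun γ' : Phase => dot3 (A γ') γ'.2.1) (x,q,r)) (cross3 n r) = 0 := by
  have hX : ∀ c d : Fin 3, dX (fun γ' => A γ' c) (x,q,r) d = 0 := fun c d => by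
    have h := h1 d c (x,q,r)
    rw [pb_Pgen_eq] at h
    linarith
  have E : ∀ a b c : Fin 3,
      ((x,q,r) : Phase).2.1 b * dP (fun γ' => A γ' c) (x,q,r) a
        - ((x,q,r) : Phase).2.1 a * dP (fun γ' => A γ' c) (x,q,r) b
      + dot3 r (cross3 (fun d => eps3 a b d) (dS (fun γ' => A γ' c) (x,q,r)))
      = kdelta a c * A (x,q,r) b - kdelta b c * A (x,q,r) a := fun a b c => by
    have h := h2 a b c (x,q,r)
    rw [pb_Jgen_eq] at h
    simpa [hX] using h
  have e010 := E 0 1 0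
  norm_num [dot3, cross3, eps3, isgn, kdelta, Fin.sum_univ_three, Fin.ext_iff] at e010
  have e011 := E 0 1 1
  norm_num [dot3, cross3, eps3, isgn, kdelta, Fin.sum_univ_three, Fin.ext_iff] at e011
  have e012 := E 0 1 2
  norm_num [dot3, cross3, eps3, isgn, kdelta, Fin.sum_univ_three, Fin.ext_iff] at e012
  have e120 := E 1 2 0
  norm_num [dot3, cross3, eps3, isgn, kdelta, Fin.sum_univ_three, Fin.ext_iff] at e120
  have e121 := E 1 2 1
  norm_num [dot3, cross3, eps3, isgn, kdelta, Fin.sum_univ_three, Fin.ext_iff] at e121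
  have e122 := E 1 2 2
  norm_num [dot3, cross3, eps3, isgn, kdelta, Fin.sum_univ_three, Fin.ext_iff] at e122
  have e200 := E 2 0 0
  norm_num [dot3, cross3, eps3, isgn, kdelta, Fin.sum_univ_three, Fin.ext_iff] at e200
  have e201 := E 2 0 1
  norm_num [dot3, cross3, eps3, isgn, kdelta, Fin.sum_univ_three, Fin.ext_iff] at e201
  have e202 := E 2 0 2
  norm_num [dot3, cross3, eps3, isgn, kdelta, Fin.sum_univ_three, Fin.ext_iff] at e202
  simp only [Matrix.cons_val] at e010 e011 e012 e120 e121 e122 e200 e201 e202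
  rw [dot3, dot3, Fin.sum_univ_three, Fin.sum_univ_three,
    dP_f A hA, dP_f A hA, dP_f A hA, dS_f A hA, dS_f A hA, dS_f A hA]
  simp only [Fin.sum_univ_three, cross3, Matrix.cons_val_zero, Matrix.cons_val_one,
    Matrix.head_cons, Matrix.cons_val_two, Matrix.tail_cons]
  linear_combination (-((n 2) * q 0)) * e010
    + (-((n 2) * q 1)) * e011
    + (-((n 2) * q 2)) * e012
    + (-((n 0) * q 0)) * e120
    + (-((n 0) * q 1)) * e121
    + (-((n 0) * q 2)) * e122
    + (-((n 1) * q 0)) * e200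
    + (-((n 1) * q 1)) * e201
    + (-((n 1) * q 2)) * e202
lemma sum_single (u : R3) : (∑ a, u a • (Pi.single a 1 : R3)) = u := by
  funext b
  rw [Finset.sum_apply]
  simp [Pi.single_apply, Finset.sum_ite_eq]

lemma decomp_vec (w t : R3) :
    ((0, w, t) : Phase)
      = (∑ a, w a • ((0, Pi.single a 1, 0) : Phase)) + ∑ a, t a • ((0, 0, Pi.single a 1) : Phase) := by
  refine Prod.ext ?_ (Prod.ext ?_ ?_) <;>
    simp [Prod.fst_sum, Prod.snd_sum, sum_single]

lemma fderiv_decomp (g : Phase → ℝ) (δ : Phase) (w t : R3) :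
    fderiv ℝ g δ (0, w, t) = ∑ a, w a * dP g δ a + ∑ a, t a * dS g δ a := by
  rw [decomp_vec, map_add, map_sum, map_sum]
  simp only [map_smul, smul_eq_mul]
  rfl

lemma dot3_smul_left (t : ℝ) (v w : R3) : dot3 (t • v) w = t * dot3 v w := by
  simp [dot3, Finset.mul_sum, mul_assoc]

lemma exists_unit_orth (p s : R3) : ∃ n : R3, dot3 n n = 1 ∧ dot3 n p = 0 ∧ dot3 n s = 0 := by
  classical
  set E3 := EuclideanSpace ℝ (Fin 3)
  let p' : E3 := WithLp.toLp 2 p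
  let s' : E3 := WithLp.toLp 2 s
  let K : Submodule ℝ E3 := Submodule.span ℝ {p', s'}
  have hKne : Kᗮ ≠ ⊥ := by
    intro h
    have hKtop : K = ⊤ := Submodule.orthogonal_eq_bot_iff.mp h
    have hle : Module.finrank ℝ K ≤ 2 := by
      have h1 := finrank_span_le_card (R := ℝ) ({p', s'} : Set E3)
      refine h1.trans ?_
      have h2 : ({p', s'} : Set E3).toFinset ⊆ ({p', s'} : Finset E3) := by
        intro y hy
        simp only [Set.mem_toFinset] at hy
        simpa using hy
      calc ({p', s'} : Set E3).toFinset.card ≤ ({p', s'} : Finset E3).card :=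
            Finset.card_le_card h2
        _ ≤ 2 := (Finset.card_insert_le _ _).trans (by simp)
    rw [hKtop] at hle
    have h3 : Module.finrank ℝ (⊤ : Submodule ℝ E3) = 3 := by
      rw [finrank_top]
      simp [E3]
    omega
  obtain ⟨m, hmK, hm0⟩ := Submodule.ne_bot_iff _ |>.mp hKne
  let mm : R3 := fun a => m a
  have hmp : dot3 mm p = 0 := by
    have := hmK p' (Submodule.subset_span (by simp))
    simpa [p', mm, E3, dot3, PiLp.inner_apply, mul_comm] using this
  have hms : dot3 mm s = 0 := by
    have := hmK s' (Submodule.subset_span (by simp))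
    simpa [s', mm, E3, dot3, PiLp.inner_apply, mul_comm] using this
  have hmm : 0 < dot3 mm mm := by
    obtain ⟨a, ha⟩ : ∃ a, mm a ≠ 0 := by
      by_contra h
      push_neg at h
      exact hm0 (by ext i; simpa using h i)
    have : (0:ℝ) < ∑ b, mm b * mm b := by
      apply Finset.sum_pos' (fun b _ => mul_self_nonneg _)
      exact ⟨a, Finset.mem_univ a, mul_self_pos.mpr ha⟩
    simpa [dot3] using this
  set c := dot3 mm mm with hc
  have hs : Real.sqrt c * Real.sqrt c = c := Real.mul_self_sqrt hmm.le
  have hsp : Real.sqrt c ≠ 0 := by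
    have := Real.sqrt_pos.mpr hmm
    linarith
  refine ⟨(Real.sqrt c)⁻¹ • mm, ?_, ?_, ?_⟩
  · rw [dot3_smul_left]
    rw [show dot3 mm ((Real.sqrt c)⁻¹ • mm) = (Real.sqrt c)⁻¹ * c by
      simp only [dot3, Pi.smul_apply, smul_eq_mul, hc]
      rw [Finset.mul_sum]
      exact Finset.sum_congr rfl fun a _ => by ring]
    field_simp
    rw [Real.sq_sqrt hmm.le]
  · rw [dot3_smul_left, hmp, mul_zero]
  · rw [dot3_smul_left, hms, mul_zero]

lemma cross3_nn (n v : R3) (hnn : dot3 n n = 1) (hnv : dot3 n v = 0) :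
    cross3 n (cross3 n v) = -v := by
  simp only [dot3, Fin.sum_univ_three] at hnn hnv
  funext d
  fin_cases d
  · simp [cross3]
    linear_combination (-(v 0)) * hnn + n 0 * hnv
  · simp [cross3]
    linear_combination (-(v 1)) * hnn + n 1 * hnv
  · simp [cross3]
    linear_combination (-(v 2)) * hnn + n 2 * hnv

lemma cross3_lin (n : R3) (a b : ℝ) (u v : R3) :
    cross3 n (a • u + b • v) = a • cross3 n u + b • cross3 n v := by
  funext d
  fin_cases d <;> (simp [cross3]; ring)

lemma dot3_neg_right (v w : R3) : dot3 v (-w) = -dot3 v w := by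
  simp [dot3]

theorem statement11 (A : Phase → R3) (hA : ContDiff ℝ 1 A)
    (h1 : ∀ a b : Fin 3, ∀ γ, pb (Pgen a) (fun γ => A γ b) γ = 0)
    (h2 : ∀ a b c : Fin 3, ∀ γ, pb (Jgen a b) (fun γ => A γ c) γ
      = kdelta a c * A γ b - kdelta b c * A γ a)
    (h3 : ∀ x p s : R3, A (x, -p, -s) = A (x, p, s)) :
    ∀ γ : Phase, dot3 (A γ) γ.2.1 = 0 := by
  intro γ
  obtain ⟨x, p, s⟩ := γ
  obtain ⟨n, hnn, hnp, hns⟩ := exists_unit_orth p s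
  have hcpn : cross3 n (cross3 n p) = -p := cross3_nn n p hnn hnp
  have hcsn : cross3 n (cross3 n s) = -s := cross3_nn n s hnn hns
  set cp := cross3 n p with hcp
  set cs := cross3 n s with hcs
  set F : ℝ → ℝ := fun θ =>
    dot3 (A (x, Real.cos θ • p + Real.sin θ • cp, Real.cos θ • s + Real.sin θ • cs))
      (Real.cos θ • p + Real.sin θ • cp) with hFdef
  have hF : ∀ θ, HasDerivAt F 0 θ := by
    intro θ
    have hcurve : HasDerivAt
        (fun θ' : ℝ => ((x, Real.cos θ' • p + Real.sin θ' • cp,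
            Real.cos θ' • s + Real.sin θ' • cs) : Phase))
        (0, (-Real.sin θ) • p + Real.cos θ • cp, (-Real.sin θ) • s + Real.cos θ • cs) θ := by
      apply HasDerivAt.prodMk (hasDerivAt_const θ x)
      apply HasDerivAt.prodMk
      · exact ((Real.hasDerivAt_cos θ).smul_const p).add ((Real.hasDerivAt_sin θ).smul_const cp)
      · exact ((Real.hasDerivAt_cos θ).smul_const s).add ((Real.hasDerivAt_sin θ).smul_const cs)
    set δ : Phase := (x, Real.cos θ • p + Real.sin θ • cp, Real.cos θ • s + Real.sin θ • cs) with hδ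
    have hfd : HasFDerivAt (fun γ' : Phase => dot3 (A γ') γ'.2.1)
        (fderiv ℝ (fun γ' : Phase => dot3 (A γ') γ'.2.1) δ) δ := by
      have h := hasFDerivAt_f A hA δ
      rwa [← h.fderiv] at h
    have h0 := hfd.comp_hasDerivAt θ hcurve
    have hw : (-Real.sin θ) • p + Real.cos θ • cp
        = cross3 n (Real.cos θ • p + Real.sin θ • cp) := by
      rw [cross3_lin, hcpn]
      funext d
      simp
      ring
    have ht : (-Real.sin θ) • s + Real.cos θ • cs
        = cross3 n (Real.cos θ • s + Real.sin θ • cs) := by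
      rw [cross3_lin, hcsn]
      funext d
      simp
      ring
    rw [hw, ht] at h0
    rw [fderiv_decomp] at h0
    have hkey := key A hA h1 h2 x (Real.cos θ • p + Real.sin θ • cp)
      (Real.cos θ • s + Real.sin θ • cs) n
    have hval : (∑ a, (cross3 n (Real.cos θ • p + Real.sin θ • cp)) a
          * dP (fun γ' : Phase => dot3 (A γ') γ'.2.1) δ a)
        + ∑ a, (cross3 n (Real.cos θ • s + Real.sin θ • cs)) a
          * dS (fun γ' : Phase => dot3 (A γ') γ'.2.1) δ a = 0 := by
      rw [hδ]
      simpa [dot3, mul_comm] using hkey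
    rwa [hval] at h0
  have hFdiff : Differentiable ℝ F := fun θ => (hF θ).differentiableAt
  have hFconst := is_const_of_deriv_eq_zero hFdiff (fun θ => (hF θ).deriv) Real.pi 0
  have hF0 : F 0 = dot3 (A (x, p, s)) p := by
    simp [hFdef]
  have hFpi : F Real.pi = -(dot3 (A (x, p, s)) p) := by
    rw [hFdef]
    simp only [Real.cos_pi, Real.sin_pi, zero_smul, add_zero, neg_one_smul]
    rw [h3, dot3_neg_right]
  rw [hFpi, hF0] at hFconst
  show dot3 (A (x,p,s)) p = 0
  linarith
end
end

section
/- (The Poincaré algebra is perfect.) Let η₄ be the 4×4 real diagonal matrix diag(−1,1,1,1), and let 𝔭 be the set of 5×5 real matrices M (indices in Fin 5 = {0,1,2,3,4}) such that M 4 j = 0 for all j (the last row vanishes) and the upper-left 4×4 block ω of M satisfies ωᵀη₄ + η₄ω = 0 (the block is skew-adjoint with respect to the Minkowski form). Then 𝔭 is closed under the matrix commutator ⁅A,B⁆ = AB − BA (it is a Lie subalgebra of the 5×5 matrices), and 𝔭 is perfect: every element of 𝔭 is a finite linear combination of commutators ⁅A,B⁆ with A,B ∈ 𝔭, i.e. the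 derived subalgebra ⁅𝔭,𝔭⁆ equals 𝔭. -/
noncomputable section

open Finset Matrix

/-- Minkowski form η₄ = diag(−1,1,1,1). -/
def eta4m : Matrix (Fin 4) (Fin 4) ℝ := Matrix.diagonal ![-1, 1, 1, 1]

/-- The upper-left 4×4 block of a 5×5 matrix. -/
def lorBlock (M : Matrix (Fin 5) (Fin 5) ℝ) : Matrix (Fin 4) (Fin 4) ℝ :=
  Matrix.of fun i j : Fin 4 => M i.castSucc j.castSucc

/-- The matrix realization of the Poincaré algebra: 5×5 matrices with vanishing last
row whose upper-left 4×4 block is skew-adjoint with respect to η₄. -/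
def poincAlg : Set (Matrix (Fin 5) (Fin 5) ℝ) :=
  {M | (∀ j, M 4 j = 0) ∧ (lorBlock M)ᵀ * eta4m + eta4m * lorBlock M = 0}

lemma pcs0 : (Fin.castSucc (0:Fin 4)) = (0:Fin 5) := rfl
lemma pcs1 : (Fin.castSucc (1:Fin 4)) = (1:Fin 5) := rfl
lemma pcs2 : (Fin.castSucc (2:Fin 4)) = (2:Fin 5) := rfl
lemma pcs3 : (Fin.castSucc (3:Fin 4)) = (3:Fin 5) := rfl

lemma lorBlock_mul (X Y : Matrix (Fin 5) (Fin 5) ℝ) (h : ∀ j, Y 4 j = 0) :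
    lorBlock (X * Y) = lorBlock X * lorBlock Y := by
  ext a b
  simp only [lorBlock, Matrix.of_apply, Matrix.mul_apply, Fin.sum_univ_five, Fin.sum_univ_four,
    pcs0, pcs1, pcs2, pcs3, h]
  ring

lemma pclosure : ∀ A ∈ poincAlg, ∀ B ∈ poincAlg, A * B - B * A ∈ poincAlg := by
  intro A hA B hB
  constructor
  · intro j
    simp [Matrix.sub_apply, Matrix.mul_apply, hA.1, hB.1]
  · have hlb : lorBlock (A * B - B * A)
        = lorBlock A * lorBlock B - lorBlock B * lorBlock A := by
      have h : lorBlock (A * B - B * A) = lorBlock (A*B) - lorBlock (B*A) := by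
        ext a b; simp [lorBlock]
      rw [h, lorBlock_mul A B hB.1, lorBlock_mul B A hA.1]
    rw [hlb]
    set X := lorBlock A
    set Y := lorBlock B
    have hX : Xᵀ * eta4m = -(eta4m * X) := eq_neg_of_add_eq_zero_left hA.2
    have hY : Yᵀ * eta4m = -(eta4m * Y) := eq_neg_of_add_eq_zero_left hB.2
    have e1 : Yᵀ * Xᵀ * eta4m = eta4m * (Y * X) := by
      rw [mul_assoc, hX, mul_neg, ← mul_assoc, hY]
      simp [mul_assoc]
    have e2 : Xᵀ * Yᵀ * eta4m = eta4m * (X * Y) := by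
      rw [mul_assoc, hY, mul_neg, ← mul_assoc, hX]
      simp [mul_assoc]
    simp only [Matrix.transpose_sub, Matrix.transpose_mul, sub_mul, mul_sub, e1, e2]
    abel

def pE (i j : Fin 5) : Matrix (Fin 5) (Fin 5) ℝ := Matrix.single i j 1

lemma pE_mul (i j k l : Fin 5) : pE i j * pE k l = if j = k then pE i l else 0 := by
  unfold pE
  split
  · subst ‹j = k›; rw [Matrix.single_mul_single_same]; norm_num
  · apply Matrix.single_mul_single_of_ne; exact ‹_›

lemma pE_apply (i j a b : Fin 5) : pE i j a b = if i = a ∧ j = b then 1 else 0 := rfl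

def pK1 : Matrix (Fin 5) (Fin 5) ℝ := pE 0 1 + pE 1 0
def pK2 : Matrix (Fin 5) (Fin 5) ℝ := pE 0 2 + pE 2 0
def pK3 : Matrix (Fin 5) (Fin 5) ℝ := pE 0 3 + pE 3 0
def pJ12 : Matrix (Fin 5) (Fin 5) ℝ := pE 1 2 - pE 2 1
def pJ13 : Matrix (Fin 5) (Fin 5) ℝ := pE 1 3 - pE 3 1
def pJ23 : Matrix (Fin 5) (Fin 5) ℝ := pE 2 3 - pE 3 2
def pJ21 : Matrix (Fin 5) (Fin 5) ℝ := pE 2 1 - pE 1 2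
def pJ31 : Matrix (Fin 5) (Fin 5) ℝ := pE 3 1 - pE 1 3
def pJ32 : Matrix (Fin 5) (Fin 5) ℝ := pE 3 2 - pE 2 3
def pP1 : Matrix (Fin 5) (Fin 5) ℝ := pE 1 4
def pP2 : Matrix (Fin 5) (Fin 5) ℝ := pE 2 4
def pP3 : Matrix (Fin 5) (Fin 5) ℝ := pE 3 4

-- commutator identities
lemma pc1 : pJ12*pK2 - pK2*pJ12 = pK1 := by
  simp only [pJ12, pK2, pK1, sub_mul, mul_sub, add_mul, mul_add, pE_mul]
  simp (config := { decide := true }) only [reduceIte]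
  try norm_num
  try abel
lemma pc2 : pJ21*pK1 - pK1*pJ21 = pK2 := by
  simp only [pJ21, pK1, pK2, sub_mul, mul_sub, add_mul, mul_add, pE_mul]
  simp (config := { decide := true }) only [reduceIte]
  try norm_num
  try abel
lemma pc3 : pJ31*pK1 - pK1*pJ31 = pK3 := by
  simp only [pJ31, pK1, pK3, sub_mul, mul_sub, add_mul, mul_add, pE_mul]
  simp (config := { decide := true }) only [reduceIte]
  try norm_num
  try abel
lemma pc4 : pJ13*pJ32 - pJ32*pJ13 = pJ12 := by
  simp only [pJ13, pJ32, pJ12, sub_mul, mul_sub, add_mul, mul_add, pE_mul]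
  simp (config := { decide := true }) only [reduceIte]
  try norm_num
  try abel
lemma pc5 : pJ12*pJ23 - pJ23*pJ12 = pJ13 := by
  simp only [pJ12, pJ23, pJ13, sub_mul, mul_sub, add_mul, mul_add, pE_mul]
  simp (config := { decide := true }) only [reduceIte]
  try norm_num
  try abel
lemma pc6 : pJ21*pJ13 - pJ13*pJ21 = pJ23 := by
  simp only [pJ21, pJ13, pJ23, sub_mul, mul_sub, add_mul, mul_add, pE_mul]
  simp (config := { decide := true }) only [reduceIte]
  try norm_num
  try abel
lemma pc7 : pK1*pP1 - pP1*pK1 = pE 0 4 := by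
  simp only [pK1, pP1, sub_mul, mul_sub, add_mul, mul_add, pE_mul]
  simp (config := { decide := true }) only [reduceIte]
  try norm_num
  try abel
lemma pc8 : pJ12*pP2 - pP2*pJ12 = pP1 := by
  simp only [pJ12, pP2, pP1, sub_mul, mul_sub, add_mul, mul_add, pE_mul]
  simp (config := { decide := true }) only [reduceIte]
  try norm_num
  try abel
lemma pc9 : pJ23*pP3 - pP3*pJ23 = pP2 := by
  simp only [pJ23, pP3, pP2, sub_mul, mul_sub, add_mul, mul_add, pE_mul]
  simp (config := { decide := true }) only [reduceIte]
  try norm_num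
  try abel
lemma pc10 : pJ31*pP1 - pP1*pJ31 = pP3 := by
  simp only [pJ31, pP1, pP3, sub_mul, mul_sub, add_mul, mul_add, pE_mul]
  simp (config := { decide := true }) only [reduceIte]
  try norm_num
  try abel

-- membership of generators
lemma memK1 : pK1 ∈ poincAlg := by
  constructor
  · intro j; simp [pK1, pE_apply]
  · ext a b
    fin_cases a <;> fin_cases b <;>
      simp (config := { decide := true }) [pK1, pE_apply, lorBlock, eta4m, Matrix.mul_diagonal, Matrix.diagonal_mul,
        pcs0, pcs1, pcs2, pcs3, Matrix.vecHead, Matrix.vecTail, Fin.ext_iff]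
lemma memK2 : pK2 ∈ poincAlg := by
  constructor
  · intro j; simp [pK2, pE_apply]
  · ext a b
    fin_cases a <;> fin_cases b <;>
      simp (config := { decide := true }) [pK2, pE_apply, lorBlock, eta4m, Matrix.mul_diagonal, Matrix.diagonal_mul,
        pcs0, pcs1, pcs2, pcs3, Matrix.vecHead, Matrix.vecTail, Fin.ext_iff]
lemma memK3 : pK3 ∈ poincAlg := by
  constructor
  · intro j; simp [pK3, pE_apply]
  · ext a b
    fin_cases a <;> fin_cases b <;>
      simp (config := { decide := true }) [pK3, pE_apply, lorBlock, eta4m, Matrix.mul_diagonal, Matrix.diagonal_mul,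
        pcs0, pcs1, pcs2, pcs3, Matrix.vecHead, Matrix.vecTail, Fin.ext_iff]
lemma memJ12 : pJ12 ∈ poincAlg := by
  constructor
  · intro j; simp [pJ12, pE_apply]
  · ext a b
    fin_cases a <;> fin_cases b <;>
      simp (config := { decide := true }) [pJ12, pE_apply, lorBlock, eta4m, Matrix.mul_diagonal, Matrix.diagonal_mul,
        pcs0, pcs1, pcs2, pcs3, Matrix.vecHead, Matrix.vecTail, Fin.ext_iff]
lemma memJ13 : pJ13 ∈ poincAlg := by
  constructor
  · intro j; simp [pJ13, pE_apply]
  · ext a b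
    fin_cases a <;> fin_cases b <;>
      simp (config := { decide := true }) [pJ13, pE_apply, lorBlock, eta4m, Matrix.mul_diagonal, Matrix.diagonal_mul,
        pcs0, pcs1, pcs2, pcs3, Matrix.vecHead, Matrix.vecTail, Fin.ext_iff]
lemma memJ23 : pJ23 ∈ poincAlg := by
  constructor
  · intro j; simp [pJ23, pE_apply]
  · ext a b
    fin_cases a <;> fin_cases b <;>
      simp (config := { decide := true }) [pJ23, pE_apply, lorBlock, eta4m, Matrix.mul_diagonal, Matrix.diagonal_mul,
        pcs0, pcs1, pcs2, pcs3, Matrix.vecHead, Matrix.vecTail, Fin.ext_iff]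
lemma memJ21 : pJ21 ∈ poincAlg := by
  constructor
  · intro j; simp [pJ21, pE_apply]
  · ext a b
    fin_cases a <;> fin_cases b <;>
      simp (config := { decide := true }) [pJ21, pE_apply, lorBlock, eta4m, Matrix.mul_diagonal, Matrix.diagonal_mul,
        pcs0, pcs1, pcs2, pcs3, Matrix.vecHead, Matrix.vecTail, Fin.ext_iff]
lemma memJ31 : pJ31 ∈ poincAlg := by
  constructor
  · intro j; simp [pJ31, pE_apply]
  · ext a b
    fin_cases a <;> fin_cases b <;>
      simp (config := { decide := true }) [pJ31, pE_apply, lorBlock, eta4m, Matrix.mul_diagonal, Matrix.diagonal_mul,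
        pcs0, pcs1, pcs2, pcs3, Matrix.vecHead, Matrix.vecTail, Fin.ext_iff]
lemma memJ32 : pJ32 ∈ poincAlg := by
  constructor
  · intro j; simp [pJ32, pE_apply]
  · ext a b
    fin_cases a <;> fin_cases b <;>
      simp (config := { decide := true }) [pJ32, pE_apply, lorBlock, eta4m, Matrix.mul_diagonal, Matrix.diagonal_mul,
        pcs0, pcs1, pcs2, pcs3, Matrix.vecHead, Matrix.vecTail, Fin.ext_iff]
lemma memP1 : pP1 ∈ poincAlg := by
  constructor
  · intro j; simp [pP1, pE_apply]
  · ext a b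
    fin_cases a <;> fin_cases b <;>
      simp (config := { decide := true }) [pP1, pE_apply, lorBlock, eta4m, Matrix.mul_diagonal, Matrix.diagonal_mul,
        pcs0, pcs1, pcs2, pcs3, Matrix.vecHead, Matrix.vecTail, Fin.ext_iff]
lemma memP2 : pP2 ∈ poincAlg := by
  constructor
  · intro j; simp [pP2, pE_apply]
  · ext a b
    fin_cases a <;> fin_cases b <;>
      simp (config := { decide := true }) [pP2, pE_apply, lorBlock, eta4m, Matrix.mul_diagonal, Matrix.diagonal_mul,
        pcs0, pcs1, pcs2, pcs3, Matrix.vecHead, Matrix.vecTail, Fin.ext_iff]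
lemma memP3 : pP3 ∈ poincAlg := by
  constructor
  · intro j; simp [pP3, pE_apply]
  · ext a b
    fin_cases a <;> fin_cases b <;>
      simp (config := { decide := true }) [pP3, pE_apply, lorBlock, eta4m, Matrix.mul_diagonal, Matrix.diagonal_mul,
        pcs0, pcs1, pcs2, pcs3, Matrix.vecHead, Matrix.vecTail, Fin.ext_iff]

lemma pdecomp (M : Matrix (Fin 5) (Fin 5) ℝ) (hM : M ∈ poincAlg) :
    M = M 0 1 • pK1 + M 0 2 • pK2 + M 0 3 • pK3
      + M 1 2 • pJ12 + M 1 3 • pJ13 + M 2 3 • pJ23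
      + M 0 4 • pE 0 4 + M 1 4 • pP1 + M 2 4 • pP2 + M 3 4 • pP3 := by
  have key : ∀ a b : Fin 4,
      ((lorBlock M)ᵀ * eta4m + eta4m * lorBlock M) a b = 0 :=
    fun a b => congrFun (congrFun hM.2 a) b
  have h00 : M 0 0 = 0 := by
    have := key 0 0
    simp [eta4m, lorBlock, Matrix.mul_diagonal, Matrix.diagonal_mul, pcs0] at this; linarith
  have h11 : M 1 1 = 0 := by
    have := key 1 1
    simp [eta4m, lorBlock, Matrix.mul_diagonal, Matrix.diagonal_mul, pcs1,
      Matrix.vecHead, Matrix.vecTail] at this; linarith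
  have h22 : M 2 2 = 0 := by
    have := key 2 2
    simp [eta4m, lorBlock, Matrix.mul_diagonal, Matrix.diagonal_mul, pcs2,
      Matrix.vecHead, Matrix.vecTail] at this; linarith
  have h33 : M 3 3 = 0 := by
    have := key 3 3
    simp [eta4m, lorBlock, Matrix.mul_diagonal, Matrix.diagonal_mul, pcs3,
      Matrix.vecHead, Matrix.vecTail] at this; linarith
  have h01 : M 1 0 = M 0 1 := by
    have := key 0 1
    simp [eta4m, lorBlock, Matrix.mul_diagonal, Matrix.diagonal_mul, pcs0, pcs1,
      Matrix.vecHead, Matrix.vecTail] at this; linarith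
  have h02 : M 2 0 = M 0 2 := by
    have := key 0 2
    simp [eta4m, lorBlock, Matrix.mul_diagonal, Matrix.diagonal_mul, pcs0, pcs2,
      Matrix.vecHead, Matrix.vecTail] at this; linarith
  have h03 : M 3 0 = M 0 3 := by
    have := key 0 3
    simp [eta4m, lorBlock, Matrix.mul_diagonal, Matrix.diagonal_mul, pcs0, pcs3,
      Matrix.vecHead, Matrix.vecTail] at this; linarith
  have h12 : M 2 1 = - M 1 2 := by
    have := key 1 2
    simp [eta4m, lorBlock, Matrix.mul_diagonal, Matrix.diagonal_mul, pcs1, pcs2,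
      Matrix.vecHead, Matrix.vecTail] at this; linarith
  have h13 : M 3 1 = - M 1 3 := by
    have := key 1 3
    simp [eta4m, lorBlock, Matrix.mul_diagonal, Matrix.diagonal_mul, pcs1, pcs3,
      Matrix.vecHead, Matrix.vecTail] at this; linarith
  have h23 : M 3 2 = - M 2 3 := by
    have := key 2 3
    simp [eta4m, lorBlock, Matrix.mul_diagonal, Matrix.diagonal_mul, pcs2, pcs3,
      Matrix.vecHead, Matrix.vecTail] at this; linarith
  have hlast := hM.1
  ext i j
  fin_cases i <;> fin_cases j <;>
    simp (config := { decide := true }) [pK1, pK2, pK3, pJ12, pJ13, pJ23, pP1, pP2, pP3, pE_apply, Fin.ext_iff,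
      h00, h11, h22, h33, h01, h02, h03, h12, h13, h23, hlast]

theorem statement16 :
    (∀ A ∈ poincAlg, ∀ B ∈ poincAlg, A * B - B * A ∈ poincAlg) ∧
    (∀ M ∈ poincAlg, M ∈ Submodule.span ℝ
      {C : Matrix (Fin 5) (Fin 5) ℝ | ∃ A ∈ poincAlg, ∃ B ∈ poincAlg, C = A * B - B * A}) := by
  constructor
  · exact pclosure
  · intro M hM
    set S := {C : Matrix (Fin 5) (Fin 5) ℝ | ∃ A ∈ poincAlg, ∃ B ∈ poincAlg, C = A * B - B * A}
    have m1 : pK1 ∈ Submodule.span ℝ S :=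
      Submodule.subset_span ⟨pJ12, memJ12, pK2, memK2, pc1.symm⟩
    have m2 : pK2 ∈ Submodule.span ℝ S :=
      Submodule.subset_span ⟨pJ21, memJ21, pK1, memK1, pc2.symm⟩
    have m3 : pK3 ∈ Submodule.span ℝ S :=
      Submodule.subset_span ⟨pJ31, memJ31, pK1, memK1, pc3.symm⟩
    have m4 : pJ12 ∈ Submodule.span ℝ S :=
      Submodule.subset_span ⟨pJ13, memJ13, pJ32, memJ32, pc4.symm⟩
    have m5 : pJ13 ∈ Submodule.span ℝ S :=
      Submodule.subset_span ⟨pJ12, memJ12, pJ23, memJ23, pc5.symm⟩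
    have m6 : pJ23 ∈ Submodule.span ℝ S :=
      Submodule.subset_span ⟨pJ21, memJ21, pJ13, memJ13, pc6.symm⟩
    have m7 : pE 0 4 ∈ Submodule.span ℝ S :=
      Submodule.subset_span ⟨pK1, memK1, pP1, memP1, pc7.symm⟩
    have m8 : pP1 ∈ Submodule.span ℝ S :=
      Submodule.subset_span ⟨pJ12, memJ12, pP2, memP2, pc8.symm⟩
    have m9 : pP2 ∈ Submodule.span ℝ S :=
      Submodule.subset_span ⟨pJ23, memJ23, pP3, memP3, pc9.symm⟩
    have m10 : pP3 ∈ Submodule.span ℝ S :=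
      Submodule.subset_span ⟨pJ31, memJ31, pP1, memP1, pc10.symm⟩
    rw [pdecomp M hM]
    exact Submodule.add_mem _ (Submodule.add_mem _ (Submodule.add_mem _ (Submodule.add_mem _
      (Submodule.add_mem _ (Submodule.add_mem _ (Submodule.add_mem _ (Submodule.add_mem _
      (Submodule.add_mem _ (Submodule.smul_mem _ _ m1) (Submodule.smul_mem _ _ m2))
      (Submodule.smul_mem _ _ m3)) (Submodule.smul_mem _ _ m4)) (Submodule.smul_mem _ _ m5))
      (Submodule.smul_mem _ _ m6)) (Submodule.smul_mem _ _ m7)) (Submodule.smul_mem _ _ m8))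
      (Submodule.smul_mem _ _ m9)) (Submodule.smul_mem _ _ m10)
end
end

section
/- (The standard boost between the momentum rest frame and a given frame.) Let P be future-directed timelike with κ := √(−η(P,P)) and let u be a future-directed unit timelike vector. Then 1 − η(u,P)/κ > 0, and the matrix B with entries B^μ_ν := δ^μ_ν + (P^μ/κ + u^μ)(P_ν/κ + u_ν)/(1 − η(u,P)/κ) − (2/κ)u^μP_ν satisfies: (i) η(Bv, Bw) = η(v,w) for all v,w ∈ V (B is a Lorentz transformation); (ii) B(P/κ) = u; (iii) Bv = v for every v with η(v,u) = 0 and η(v,P) = 0 (B fixes the spacelike plane orthogonal to u and P). -/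
noncomputable section

open Finset

abbrev V4 := Fin 4 → ℝ

/-- Sign of the Minkowski metric diag(-1,1,1,1) on the diagonal. -/
def sgn4 (μ : Fin 4) : ℝ := if μ = 0 then -1 else 1

/-- Index lowering with η = diag(-1,1,1,1): `lo v μ = v_μ`. -/
def lo (v : V4) : V4 := fun μ => sgn4 μ * v μ

/-- Minkowski bilinear form of signature (-,+,+,+). -/
def mink (v w : V4) : ℝ := ∑ μ, lo v μ * w μ

/-- Future-directed timelike vector. -/
def FDTimelike (v : V4) : Prop := mink v v < 0 ∧ 0 < v 0

/-- Future-directed unit timelike vector. -/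
def FDUnit (u : V4) : Prop := mink u u = -1 ∧ 0 < u 0

/-- κ = √(−η(P,P)). -/
def kappa (P : V4) : ℝ := Real.sqrt (-(mink P P))

/-- Spin tensor at the point x: S[x]_{μν} = J_{μν} − x_μ P_ν + x_ν P_μ. -/
def spinT (J : Fin 4 → Fin 4 → ℝ) (P x : V4) (μ ν : Fin 4) : ℝ :=
  J μ ν - lo x μ * lo P ν + lo x ν * lo P μ

/-- SSC worldline with respect to f: points where S[x]_{μν} f^ν = 0. -/
def SSCline (J : Fin 4 → Fin 4 → ℝ) (P f : V4) : Set V4 :=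
  {x | ∀ μ, ∑ ν, spinT J P x μ ν * f ν = 0}

/-- The standard boost B(u) with respect to P:
B^μ_ν = δ^μ_ν + (P^μ/κ + u^μ)(P_ν/κ + u_ν)/(1 − η(u,P)/κ) − (2/κ) u^μ P_ν. -/
def boost (P u : V4) (μ ν : Fin 4) : ℝ :=
  (if μ = ν then 1 else 0)
  + (P μ / kappa P + u μ) * (lo P ν / kappa P + lo u ν) / (1 - mink u P / kappa P)
  - (2 / kappa P) * u μ * lo P ν

/-- A matrix acting on a vector: (Bv)^μ = B^μ_ν v^ν. -/
def matApp (B : Fin 4 → Fin 4 → ℝ) (v : V4) : V4 := fun μ => ∑ ν, B μ ν * v ν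

lemma mink_expand (v w : V4) : mink v w = -(v 0 * w 0) + v 1 * w 1 + v 2 * w 2 + v 3 * w 3 := by
  simp [mink, lo, sgn4, Fin.sum_univ_four,
    show ((1:Fin 4) = 0) = False by simp, show ((2:Fin 4) = 0) = False by decide,
    show ((3:Fin 4) = 0) = False by decide]

lemma mink_comm (v w : V4) : mink v w = mink w v := by
  simp [mink, lo, Fin.sum_univ_four]; ring

lemma mink_add_left (a b w : V4) : mink (a + b) w = mink a w + mink b w := by
  simp [mink, lo, Fin.sum_univ_four]; ring

lemma mink_add_right (a v w : V4) : mink a (v + w) = mink a v + mink a w := by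
  simp [mink, lo, Fin.sum_univ_four]; ring

lemma mink_sub_left (a b w : V4) : mink (a - b) w = mink a w - mink b w := by
  simp [mink, lo, Fin.sum_univ_four]; ring

lemma mink_sub_right (a v w : V4) : mink a (v - w) = mink a v - mink a w := by
  simp [mink, lo, Fin.sum_univ_four]; ring

lemma mink_smul_left (c : ℝ) (a w : V4) : mink (c • a) w = c * mink a w := by
  simp [mink, lo, Fin.sum_univ_four]; ring

lemma mink_smul_right (c : ℝ) (a w : V4) : mink a (c • w) = c * mink a w := by
  simp [mink, lo, Fin.sum_univ_four]; ring

lemma boost_apply (P u v : V4) :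
    matApp (boost P u) v =
      v + ((mink ((kappa P)⁻¹ • P + u) v) / (1 - mink u P / kappa P)) • ((kappa P)⁻¹ • P + u)
        - (2 * mink ((kappa P)⁻¹ • P) v) • u := by
  funext μ
  fin_cases μ <;>
    · simp [matApp, boost, mink, lo, sgn4, Fin.sum_univ_four]
      ring

theorem statement17 (P u : V4) (hP : FDTimelike P) (hu : FDUnit u) :
    0 < 1 - mink u P / kappa P ∧
    (∀ v w : V4, mink (matApp (boost P u) v) (matApp (boost P u) w) = mink v w) ∧
    matApp (boost P u) ((kappa P)⁻¹ • P) = u ∧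
    (∀ v : V4, mink v u = 0 → mink v P = 0 → matApp (boost P u) v = v) := by
  obtain ⟨hP1, hP0⟩ := hP
  obtain ⟨hu1, hu0⟩ := hu
  have hκpos : 0 < kappa P := Real.sqrt_pos.mpr (by linarith)
  have hκne : kappa P ≠ 0 := hκpos.ne'
  have hκ2 : kappa P ^ 2 = -(mink P P) := Real.sq_sqrt (by linarith)
  have hPP : mink P P = -(kappa P ^ 2) := by linarith
  have hup : mink u P < 0 := by
    rw [mink_expand] at hu1 hP1 ⊢
    nlinarith [sq_nonneg (u 1 * P 2 - u 2 * P 1), sq_nonneg (u 1 * P 3 - u 3 * P 1),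
      sq_nonneg (u 2 * P 3 - u 3 * P 2), mul_pos hu0 hP0,
      sq_nonneg (u 0 * P 0 + (u 1 * P 1 + u 2 * P 2 + u 3 * P 3)),
      sq_nonneg (u 1 * P 1 + u 2 * P 2 + u 3 * P 3)]
  have hd : 0 < 1 - mink u P / kappa P := by
    have : mink u P / kappa P < 0 := div_neg_of_neg_of_pos hup hκpos
    linarith
  have hdne : 1 - mink u P / kappa P ≠ 0 := hd.ne'
  refine ⟨hd, ?_, ?_, ?_⟩
  · intro v w
    rw [boost_apply, boost_apply]
    simp only [mink_add_left, mink_add_right, mink_sub_left, mink_sub_right,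
      mink_smul_left, mink_smul_right]
    simp only [mink_comm v u, mink_comm w u, mink_comm v P, mink_comm w P, mink_comm P u]
    rw [hu1, hPP]
    set d := 1 - mink u P / kappa P with hdd
    have hdn : d ≠ 0 := hdne
    have hup' : mink u P = kappa P * (1 - d) := by rw [hdd]; field_simp; ring
    rw [hup']
    field_simp
    ring
  · rw [boost_apply]
    have e2 : mink ((kappa P)⁻¹ • P) ((kappa P)⁻¹ • P) = -1 := by
      rw [mink_smul_left, mink_smul_right, hPP]
      field_simp
    have e1 : mink ((kappa P)⁻¹ • P + u) ((kappa P)⁻¹ • P) =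
        -(1 - mink u P / kappa P) := by
      rw [mink_add_left, mink_smul_left, mink_smul_right, mink_smul_right, hPP,
        mink_comm u P]
      field_simp
      ring
    rw [e1, e2, neg_div, div_self hdne]
    funext μ
    simp only [Pi.add_apply, Pi.sub_apply, Pi.smul_apply, smul_eq_mul]
    ring
  · intro v hvu hvP
    rw [boost_apply]
    have e1 : mink ((kappa P)⁻¹ • P + u) v = 0 := by
      rw [mink_add_left, mink_smul_left, mink_comm P v, mink_comm u v, hvu, hvP]
      ring
    have e2 : mink ((kappa P)⁻¹ • P) v = 0 := by
      rw [mink_smul_left, mink_comm P v, hvP]; ring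
    rw [e1, e2]
    simp
end
end
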